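/- The Teichmüller modulus function τ(t) = 2·K(1/√(1+t)) / K(√(t/(1+t))) is strictly decreasing on (0,∞), with τ(t) → ∞ as t → 0⁺ and τ(t) → 0 as t → ∞. -/

import Mathlib

open Real

/-- Complete elliptic integral of the first kind. -/
noncomputable def ellK (r : ℝ) : ℝ :=
  ∫ θ in (0:ℝ)..(π/2), 1 / Real.sqrt (1 - r ^ 2 * Real.sin θ ^ 2)

/-- Complete elliptic integral of the second kind. -/
noncomputable def ellE (r : ℝ) : ℝ :=
  ∫ θ in (0:ℝ)..(π/2), Real.sqrt (1 - r ^ 2 * Real.sin θ ^ 2)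

/-- Complementary elliptic integral K'(k) = K(√(1-k²)). -/
noncomputable def ellK' (k : ℝ) : ℝ := ellK (Real.sqrt (1 - k ^ 2))

/-- Complementary elliptic integral E'(k) = E(√(1-k²)). -/
noncomputable def ellE' (k : ℝ) : ℝ := ellE (Real.sqrt (1 - k ^ 2))

/-- The Teichmüller modulus function τ. -/
noncomputable def tau (t : ℝ) : ℝ :=
  2 * ellK (1 / Real.sqrt (1 + t)) / ellK (Real.sqrt (t / (1 + t)))


open Real Filter

lemma denom_pos {r : ℝ} (h : r ^ 2 < 1) (θ : ℝ) : 0 < 1 - r ^ 2 * Real.sin θ ^ 2 := by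
  nlinarith [Real.sin_sq_le_one θ, sq_nonneg r, sq_nonneg (Real.sin θ)]

lemma contK {r : ℝ} (h : r ^ 2 < 1) :
    Continuous fun θ : ℝ => 1 / Real.sqrt (1 - r ^ 2 * Real.sin θ ^ 2) := by
  apply Continuous.div continuous_const
  · exact ((continuous_const.sub (continuous_const.mul ((Real.continuous_sin).pow 2))).sqrt)
  · intro θ
    exact (Real.sqrt_pos.2 (denom_pos h θ)).ne'

lemma ellK_ge {r : ℝ} (h : r ^ 2 < 1) : π / 2 ≤ ellK r := by
  have h1 : (∫ _θ in (0:ℝ)..(π/2), (1:ℝ)) = π / 2 := by simp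
  rw [← h1, ellK]
  apply intervalIntegral.integral_mono_on (by positivity)
    intervalIntegrable_const ((contK h).intervalIntegrable _ _)
  intro θ _
  have h2 : Real.sqrt (1 - r ^ 2 * Real.sin θ ^ 2) ≤ 1 := by
    have := Real.sqrt_le_sqrt (show 1 - r ^ 2 * Real.sin θ ^ 2 ≤ 1 by
      nlinarith [sq_nonneg (r * Real.sin θ)])
    rwa [Real.sqrt_one] at this
  have := denom_pos h θ
  rw [le_div_iff₀ (Real.sqrt_pos.2 this)]
  simpa using h2

lemma ellK_le {r : ℝ} (h : r ^ 2 < 1) : ellK r ≤ (π / 2) / Real.sqrt (1 - r ^ 2) := by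
  have h1 : (∫ _θ in (0:ℝ)..(π/2), 1 / Real.sqrt (1 - r ^ 2)) = (π/2) / Real.sqrt (1 - r^2) := by
    simp [div_eq_mul_inv]
  rw [← h1, ellK]
  apply intervalIntegral.integral_mono_on (by positivity)
    ((contK h).intervalIntegrable _ _) intervalIntegrable_const
  intro θ _
  apply one_div_le_one_div_of_le (Real.sqrt_pos.2 (by linarith))
  exact Real.sqrt_le_sqrt (by nlinarith [sq_nonneg (r * Real.sin θ), sq_nonneg r, Real.sin_sq_le_one θ])

lemma ellK_strictMono {r s : ℝ} (h0 : 0 ≤ r) (hrs : r < s) (h1 : s < 1) : ellK r < ellK s := by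
  have hs2 : s ^ 2 < 1 := by nlinarith
  have hr2 : r ^ 2 < 1 := by nlinarith
  unfold ellK
  apply intervalIntegral.integral_lt_integral_of_continuousOn_of_le_of_exists_lt
    (by positivity) (contK hr2).continuousOn (contK hs2).continuousOn
  · intro θ _
    apply one_div_le_one_div_of_le (Real.sqrt_pos.2 (denom_pos hs2 θ))
    apply Real.sqrt_le_sqrt
    nlinarith [sq_nonneg (Real.sin θ), mul_le_mul_of_nonneg_right
      (pow_le_pow_left₀ h0 hrs.le 2) (sq_nonneg (Real.sin θ))]
  · refine ⟨π/2, ⟨by positivity, le_refl _⟩, ?_⟩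
    rw [Real.sin_pi_div_two]
    apply one_div_lt_one_div_of_lt (Real.sqrt_pos.2 (by simpa using denom_pos hs2 (π/2)))
    apply Real.sqrt_lt_sqrt (by nlinarith)
    nlinarith

-- antiderivative computation
lemma aux_integral {a : ℝ} (ha : 0 < a) :
    (∫ θ in (0:ℝ)..(π/2), 1 / Real.sqrt (a ^ 2 + (π/2 - θ) ^ 2)) =
      Real.arsinh (π / (2 * a)) := by
  have hpos : ∀ θ : ℝ, 0 < a ^ 2 + (π/2 - θ) ^ 2 := fun θ => by positivity
  have hderiv : ∀ θ ∈ Set.uIcc (0:ℝ) (π/2),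
      HasDerivAt (fun x : ℝ => -Real.arsinh ((π/2 - x) / a))
        (1 / Real.sqrt (a ^ 2 + (π/2 - θ) ^ 2)) θ := by
    intro θ _
    have hinner : HasDerivAt (fun x : ℝ => (π/2 - x) / a) (-(1/a)) θ := by
      have : HasDerivAt (fun x : ℝ => (π/2 - x)) (-1) θ :=
        (hasDerivAt_id θ).const_sub (π/2) |>.congr_deriv (by ring)
      simpa [div_eq_mul_inv, neg_div] using this.div_const a
    have h2 := (Real.hasDerivAt_arsinh ((π/2 - θ)/a)).comp θ hinner
    have h3 := h2.neg
    refine h3.congr_deriv ?_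
    have h4 : Real.sqrt (1 + ((π/2 - θ)/a) ^ 2) = Real.sqrt (a ^ 2 + (π/2 - θ) ^ 2) / a := by
      rw [show 1 + ((π/2 - θ)/a) ^ 2 = (a ^ 2 + (π/2 - θ) ^ 2) / a ^ 2 by
        field_simp]
      rw [Real.sqrt_div (by positivity), Real.sqrt_sq ha.le]
    rw [h4]
    have h5 : Real.sqrt (a ^ 2 + (π/2 - θ) ^ 2) ≠ 0 := (Real.sqrt_pos.2 (hpos θ)).ne'
    field_simp
  rw [intervalIntegral.integral_eq_sub_of_hasDerivAt hderiv]
  · norm_num [div_div]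
  · apply Continuous.intervalIntegrable
    apply Continuous.div continuous_const
    · exact ((continuous_const.add ((continuous_const.sub continuous_id).pow 2)).sqrt)
    · intro θ
      exact (Real.sqrt_pos.2 (hpos θ)).ne'

lemma cos_bound {r u : ℝ} (h0 : 0 ≤ r) (h1 : r < 1) (hu0 : 0 ≤ u) (huπ : u ≤ π/2) :
    1 - r ^ 2 * Real.cos u ^ 2 ≤ 2 * (1 - r) + u ^ 2 := by
  have hc0 : 0 ≤ Real.cos u := Real.cos_nonneg_of_mem_Icc ⟨by linarith [Real.pi_pos], huπ⟩
  have hc1 : Real.cos u ≤ 1 := Real.cos_le_one u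
  have hcb : 1 - u ^ 2 / 2 ≤ Real.cos u := Real.one_sub_sq_div_two_le_cos
  have hrc : r * Real.cos u ≤ 1 := mul_le_one₀ h1.le hc0 hc1
  have h6 : 1 - r ^ 2 * Real.cos u ^ 2 ≤ 2 * (1 - r * Real.cos u) := by
    nlinarith [sq_nonneg (1 - r * Real.cos u)]
  have h7 : 1 - r * Real.cos u ≤ (1 - r) + u ^ 2 / 2 := by
    nlinarith [mul_le_mul_of_nonneg_left hcb h0, sq_nonneg u]
  linarith

lemma ellK_lower {r : ℝ} (h0 : 0 ≤ r) (h1 : r < 1) :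
    Real.arsinh (π / (2 * Real.sqrt (2 * (1 - r)))) ≤ ellK r := by
  set a := Real.sqrt (2 * (1 - r)) with ha_def
  have ha : 0 < a := Real.sqrt_pos.2 (by linarith)
  have ha2 : a ^ 2 = 2 * (1 - r) := Real.sq_sqrt (by linarith)
  have hr2 : r ^ 2 < 1 := by nlinarith
  rw [← aux_integral ha, ellK]
  apply intervalIntegral.integral_mono_on (by positivity)
  · apply Continuous.intervalIntegrable
    apply Continuous.div continuous_const
    · exact ((continuous_const.add ((continuous_const.sub continuous_id).pow 2)).sqrt)
    · intro θ
      exact (Real.sqrt_pos.2 (by positivity)).ne'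
  · exact (contK hr2).intervalIntegrable _ _
  · intro θ hθ
    apply one_div_le_one_div_of_le (Real.sqrt_pos.2 (denom_pos hr2 θ))
    apply Real.sqrt_le_sqrt
    rw [ha2, show Real.sin θ = Real.cos (π/2 - θ) from (Real.cos_pi_div_two_sub θ).symm]
    exact cos_bound h0 h1 (by linarith [hθ.2]) (by linarith [hθ.1])

lemma tendsto_arsinh_atTop : Tendsto Real.arsinh atTop atTop := by
  rw [tendsto_atTop_atTop]
  intro b
  exact ⟨Real.sinh b, fun a ha => by
    rw [← Real.arsinh_sinh b]; exact Real.arsinh_le_arsinh.2 ha⟩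

/-- If g → 1 from below with g ∈ [0,1), then ellK ∘ g → ∞. -/
lemma tendsto_ellK_atTop {α : Type*} {l : Filter α} {g : α → ℝ}
    (hg : Tendsto g l (nhds 1)) (h0 : ∀ᶠ x in l, 0 ≤ g x) (h1 : ∀ᶠ x in l, g x < 1) :
    Tendsto (fun x => ellK (g x)) l atTop := by
  apply tendsto_atTop_mono' l ((h0.and h1).mono fun x hx => ellK_lower hx.1 hx.2)
  apply tendsto_arsinh_atTop.comp
  have h2 : Tendsto (fun x => 2 * Real.sqrt (2 * (1 - g x))) l (nhdsWithin 0 (Set.Ioi 0)) := by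
    rw [tendsto_nhdsWithin_iff]
    constructor
    · have : Tendsto (fun x => 2 * (1 - g x)) l (nhds 0) := by
        have h := ((tendsto_const_nhds : Tendsto (fun _ : α => (1:ℝ)) l (nhds 1)).sub hg).const_mul (2:ℝ)
        simpa using h
      simpa using (this.sqrt.const_mul (2:ℝ))
    · refine h1.mono fun x hx => Set.mem_Ioi.2 ?_
      have : (0:ℝ) < 2 * (1 - g x) := by linarith
      positivity
  have h3 := tendsto_inv_nhdsGT_zero.comp h2
  have h4 := h3.const_mul_atTop Real.pi_pos
  simpa [Function.comp, div_eq_mul_inv] using h4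

/-- If g → 0 with g ∈ [0,·), then ellK ∘ g → π/2. -/
lemma tendsto_ellK_pi_div_two {α : Type*} {l : Filter α} {g : α → ℝ}
    (hg : Tendsto g l (nhds 0)) :
    Tendsto (fun x => ellK (g x)) l (nhds (π / 2)) := by
  have hev : ∀ᶠ x in l, (g x) ^ 2 < 1 := by
    have : Set.Ioo (-1:ℝ) 1 ∈ nhds (0:ℝ) := Ioo_mem_nhds (by norm_num) (by norm_num)
    filter_upwards [hg this] with x hx
    obtain ⟨hx1, hx2⟩ := hx
    nlinarith
  have hup : Tendsto (fun x => (π/2) / Real.sqrt (1 - (g x) ^ 2)) l (nhds (π/2)) := by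
    have h1 : Tendsto (fun x => Real.sqrt (1 - (g x) ^ 2)) l (nhds 1) := by
      have : Tendsto (fun x => 1 - (g x) ^ 2) l (nhds 1) := by
        have h := (tendsto_const_nhds : Tendsto (fun _ : α => (1:ℝ)) l (nhds 1)).sub (hg.pow 2)
        simpa using h
      simpa using this.sqrt
    have h2 := (tendsto_const_nhds : Tendsto (fun _ : α => π/2) l (nhds (π/2))).div h1 one_ne_zero
    simpa [Pi.div_def] using h2
  apply tendsto_of_tendsto_of_tendsto_of_le_of_le' tendsto_const_nhds hup
  · exact hev.mono fun x hx => ellK_ge hx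
  · exact hev.mono fun x hx => ellK_le hx

-- facts about c t = 1/√(1+t), k t = √(t/(1+t)) for t > 0
lemma c_mem {t : ℝ} (ht : 0 < t) :
    0 < 1 / Real.sqrt (1 + t) ∧ 1 / Real.sqrt (1 + t) < 1 := by
  have h1 : (1:ℝ) < 1 + t := by linarith
  have h2 : (1:ℝ) < Real.sqrt (1 + t) := by
    rw [show (1:ℝ) = Real.sqrt 1 from Real.sqrt_one.symm]
    exact Real.sqrt_lt_sqrt (by norm_num) (by rw [Real.sqrt_one]; linarith)
  constructor
  · positivity
  · rw [div_lt_one (by linarith)]; linarith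

lemma k_mem {t : ℝ} (ht : 0 < t) :
    0 < Real.sqrt (t / (1 + t)) ∧ Real.sqrt (t / (1 + t)) < 1 := by
  have h0 : (0:ℝ) < 1 + t := by linarith
  have hlt : t / (1 + t) < 1 := by rw [div_lt_one h0]; linarith
  constructor
  · exact Real.sqrt_pos.2 (by positivity)
  · rw [show (1:ℝ) = Real.sqrt 1 from Real.sqrt_one.symm]
    exact Real.sqrt_lt_sqrt (by positivity) (by rw [Real.sqrt_one]; exact hlt)

lemma sq_lt_one_of_mem {x : ℝ} (h0 : 0 ≤ x) (h1 : x < 1) : x ^ 2 < 1 := by nlinarith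

/-- τ is strictly decreasing on (0,∞), τ(t) → ∞ as t → 0⁺ and τ(t) → 0 as t → ∞. -/
theorem tau_strictAnti_and_limits :
    StrictAntiOn tau (Set.Ioi 0) ∧
    Filter.Tendsto tau (nhdsWithin 0 (Set.Ioi 0)) Filter.atTop ∧
    Filter.Tendsto tau Filter.atTop (nhds 0) := by

  refine ⟨?_, ?_, ?_⟩
  · -- strict antitone
    intro s hs t ht hst
    simp only [Set.mem_Ioi] at hs ht
    obtain ⟨hcs0, hcs1⟩ := c_mem hs
    obtain ⟨hct0, hct1⟩ := c_mem ht
    obtain ⟨hks0, hks1⟩ := k_mem hs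
    obtain ⟨hkt0, hkt1⟩ := k_mem ht
    -- c t < c s
    have hc : 1 / Real.sqrt (1 + t) < 1 / Real.sqrt (1 + s) := by
      apply one_div_lt_one_div_of_lt (Real.sqrt_pos.2 (by linarith))
      exact Real.sqrt_lt_sqrt (by linarith) (by linarith)
    -- k s < k t
    have hk : Real.sqrt (s / (1 + s)) < Real.sqrt (t / (1 + t)) := by
      apply Real.sqrt_lt_sqrt (by positivity)
      rw [div_lt_div_iff₀ (by linarith) (by linarith)]
      nlinarith
    have hAt : ellK (1 / Real.sqrt (1 + t)) < ellK (1 / Real.sqrt (1 + s)) :=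
      ellK_strictMono hct0.le hc hcs1
    have hB : ellK (Real.sqrt (s / (1 + s))) < ellK (Real.sqrt (t / (1 + t))) :=
      ellK_strictMono hks0.le hk hkt1
    have hBs : 0 < ellK (Real.sqrt (s / (1 + s))) :=
      lt_of_lt_of_le (by positivity) (ellK_ge (sq_lt_one_of_mem hks0.le hks1))
    have hBt : 0 < ellK (Real.sqrt (t / (1 + t))) := lt_trans hBs hB
    have hAt0 : 0 < ellK (1 / Real.sqrt (1 + t)) :=
      lt_of_lt_of_le (by positivity) (ellK_ge (sq_lt_one_of_mem hct0.le hct1))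
    unfold tau
    calc 2 * ellK (1 / Real.sqrt (1 + t)) / ellK (Real.sqrt (t / (1 + t)))
        ≤ 2 * ellK (1 / Real.sqrt (1 + t)) / ellK (Real.sqrt (s / (1 + s))) := by
          gcongr
      _ < 2 * ellK (1 / Real.sqrt (1 + s)) / ellK (Real.sqrt (s / (1 + s))) := by
          gcongr
  · -- t → 0⁺ : tau → ∞
    set l := nhdsWithin (0:ℝ) (Set.Ioi 0)
    have hev : ∀ᶠ t in l, (0:ℝ) < t := eventually_mem_nhdsWithin
    have hc_tendsto : Tendsto (fun t : ℝ => 1 / Real.sqrt (1 + t)) l (nhds 1) := by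
      have hcont : ContinuousAt (fun t : ℝ => 1 / Real.sqrt (1 + t)) 0 := by
        apply ContinuousAt.div continuousAt_const
        · exact ((continuous_const.add continuous_id).sqrt).continuousAt
        · simp
      have := hcont.tendsto.mono_left
        (nhdsWithin_le_nhds : nhdsWithin (0:ℝ) (Set.Ioi 0) ≤ nhds 0)
      simpa using this
    have hk_tendsto : Tendsto (fun t : ℝ => Real.sqrt (t / (1 + t))) l (nhds 0) := by
      have hcont : ContinuousAt (fun t : ℝ => Real.sqrt (t / (1 + t))) 0 :=
        (continuousAt_id.div ((continuous_const.add continuous_id).continuousAt)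
          (by norm_num)).sqrt
      have := hcont.tendsto.mono_left
        (nhdsWithin_le_nhds : nhdsWithin (0:ℝ) (Set.Ioi 0) ≤ nhds 0)
      simpa using this
    have hnum : Tendsto (fun t : ℝ => 2 * ellK (1 / Real.sqrt (1 + t))) l atTop := by
      apply Tendsto.const_mul_atTop two_pos
      exact tendsto_ellK_atTop hc_tendsto (hev.mono fun t ht => (c_mem ht).1.le)
        (hev.mono fun t ht => (c_mem ht).2)
    have hden : Tendsto (fun t : ℝ => ellK (Real.sqrt (t / (1 + t)))) l (nhds (π/2)) :=
      tendsto_ellK_pi_div_two hk_tendsto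
    have hden_inv : Tendsto (fun t : ℝ => (ellK (Real.sqrt (t / (1 + t))))⁻¹) l
        (nhds (π/2)⁻¹) := hden.inv₀ (by positivity)
    have := hnum.atTop_mul_pos (show (0:ℝ) < (π/2)⁻¹ by positivity) hden_inv
    refine this.congr fun t => ?_
    simp [tau, div_eq_mul_inv]
  · -- t → ∞ : tau → 0
    have hsq : Tendsto (fun t : ℝ => Real.sqrt (1 + t)) atTop atTop := by
      rw [tendsto_atTop_atTop]
      intro b
      refine ⟨b ^ 2, fun a ha => le_trans (le_abs_self b) ?_⟩
      rw [← Real.sqrt_sq_eq_abs]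
      exact Real.sqrt_le_sqrt (by linarith)
    have hc_tendsto : Tendsto (fun t : ℝ => 1 / Real.sqrt (1 + t)) atTop (nhds 0) := by
      simp only [one_div]
      exact hsq.inv_tendsto_atTop
    have hk_tendsto : Tendsto (fun t : ℝ => Real.sqrt (t / (1 + t))) atTop (nhds 1) := by
      have h1 : Tendsto (fun t : ℝ => t / (1 + t)) atTop (nhds 1) := by
        have h2 : Tendsto (fun t : ℝ => 1 - 1 / (1 + t)) atTop (nhds 1) := by
          have h3 : Tendsto (fun t : ℝ => 1 + t) atTop atTop :=
            tendsto_atTop_add_const_left _ _ tendsto_id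
          have h4 := h3.inv_tendsto_atTop
          have h5 := (tendsto_const_nhds : Tendsto (fun _ : ℝ => (1:ℝ)) atTop (nhds 1)).sub h4
          simpa [one_div] using h5
        apply h2.congr' ?_
        filter_upwards [eventually_gt_atTop (0:ℝ)] with t ht
        field_simp
        ring
      have := h1.sqrt
      simpa using this
    have hnum : Tendsto (fun t : ℝ => 2 * ellK (1 / Real.sqrt (1 + t))) atTop
        (nhds (2 * (π / 2))) := (tendsto_ellK_pi_div_two hc_tendsto).const_mul (2:ℝ)
    have hden : Tendsto (fun t : ℝ => ellK (Real.sqrt (t / (1 + t)))) atTop atTop :=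
      tendsto_ellK_atTop hk_tendsto (Filter.Eventually.of_forall fun t => Real.sqrt_nonneg _)
        ((eventually_gt_atTop 0).mono fun t ht => (k_mem ht).2)
    have h := hnum.div_atTop hden
    exact h.congr fun t => by simp [tau]
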